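/- Let g : [0,1] → ℝ be continuously differentiable with g(0) = 0, g'(0) < 0, and suppose there exists ε ∈ (0,1) such that g(ζ) = 0 for all ζ ∈ [1−ε, 1]. Then there exist c ∈ ℝ and τ > 0 such that g(ζ) ≤ (c/τ)·g₀(ζ) + (1/τ)·g₁(ζ) for every ζ ∈ [0,1]. -/

import Mathlib

open Real

set_option maxHeartbeats 1000000


lemma g1_hasDerivAt_aux (σ κ : ℝ) :
    HasDerivAt (fun ζ : ℝ => (σ/(π*κ)) * Real.sin (π*ζ)^2 -
      (1/π) * Real.sin (π*ζ) * Real.cos (π*ζ)) (-1) 0 := by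
  have hid : HasDerivAt (fun x : ℝ => π * x) (π * 1) 0 := (hasDerivAt_id 0).const_mul π
  have hsin : HasDerivAt (fun ζ : ℝ => Real.sin (π*ζ)) (Real.cos (π*0) * (π*1)) 0 :=
    (Real.hasDerivAt_sin (π*0)).comp 0 hid
  have hcos : HasDerivAt (fun ζ : ℝ => Real.cos (π*ζ)) (-Real.sin (π*0) * (π*1)) 0 :=
    (Real.hasDerivAt_cos (π*0)).comp 0 hid
  have h2 := hsin.pow 2
  have hfull := (h2.const_mul (σ/(π*κ))).sub ((hsin.mul hcos).const_mul (1/π))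
  convert hfull using 1
  · rfl
  · rfl
  · funext x; simp only [Pi.sub_apply, Pi.pow_apply, Pi.mul_apply]; ring
  · rw [mul_zero, Real.sin_zero, Real.cos_zero]
    have : (π:ℝ) ≠ 0 := Real.pi_ne_zero
    norm_num

/-- With `g₀(ζ) = (1/(κπ))·sin²(πζ)` and
`g₁(ζ) = (σ/(πκ))·sin²(πζ) − (1/π)·sin(πζ)·cos(πζ)` (where `κ = cos(πβ/2)`,
`σ = sin(πβ/2)`, `β ∈ (-1,1)`): if `g` is continuously differentiable on
`[0,1]` with `g(0) = 0`, `g'(0) < 0` and `g ≡ 0` on `[1−ε,1]` for some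
`ε ∈ (0,1)`, then there exist `c ∈ ℝ` and `τ > 0` such that
`g(ζ) ≤ (c/τ)·g₀(ζ) + (1/τ)·g₁(ζ)` for every `ζ ∈ [0,1]`. -/
theorem exists_tau_wave_above_g
    (β : ℝ) (hβ : β ∈ Set.Ioo (-1 : ℝ) 1)
    (κ σ : ℝ) (hκ : κ = Real.cos (π * β / 2)) (hσ : σ = Real.sin (π * β / 2))
    (g₀ g₁ : ℝ → ℝ)
    (hg₀ : ∀ ζ : ℝ, g₀ ζ = (1 / (κ * π)) * Real.sin (π * ζ) ^ 2)
    (hg₁ : ∀ ζ : ℝ, g₁ ζ = (σ / (π * κ)) * Real.sin (π * ζ) ^ 2 -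
      (1 / π) * Real.sin (π * ζ) * Real.cos (π * ζ))
    (g : ℝ → ℝ) (hg : ContDiffOn ℝ 1 g (Set.Icc 0 1))
    (hg0 : g 0 = 0) (hg'0 : derivWithin g (Set.Icc 0 1) 0 < 0)
    (hflat : ∃ ε ∈ Set.Ioo (0 : ℝ) 1, ∀ ζ ∈ Set.Icc (1 - ε) 1, g ζ = 0) :
    ∃ c : ℝ, ∃ τ : ℝ, 0 < τ ∧
      ∀ ζ ∈ Set.Icc (0 : ℝ) 1, g ζ ≤ (c / τ) * g₀ ζ + (1 / τ) * g₁ ζ := by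
  have hπ : (0:ℝ) < π := Real.pi_pos
  have hκpos : 0 < κ := by
    rw [hκ]
    apply Real.cos_pos_of_mem_Ioo
    constructor
    · nlinarith [hβ.1]
    · nlinarith [hβ.2]
  have hg₀nonneg : ∀ ζ : ℝ, 0 ≤ g₀ ζ := by
    intro ζ
    rw [hg₀]
    exact mul_nonneg (le_of_lt (div_pos one_pos (mul_pos hκpos hπ))) (sq_nonneg _)
  have hg₁fun : g₁ = fun ζ : ℝ => (σ/(π*κ)) * Real.sin (π*ζ)^2 -
      (1/π) * Real.sin (π*ζ) * Real.cos (π*ζ) := funext hg₁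
  have hg₀fun : g₀ = fun ζ : ℝ => (1/(κ*π)) * Real.sin (π*ζ)^2 := funext hg₀
  have hsinc : ContDiff ℝ 1 (fun ζ:ℝ => Real.sin (π*ζ)) :=
    Real.contDiff_sin.comp (contDiff_const.mul contDiff_id)
  have hcosc : ContDiff ℝ 1 (fun ζ:ℝ => Real.cos (π*ζ)) :=
    Real.contDiff_cos.comp (contDiff_const.mul contDiff_id)
  have hcd_g1 : ContDiff ℝ 1 g₁ := by
    rw [hg₁fun]
    exact (contDiff_const.mul (hsinc.pow 2)).sub ((contDiff_const.mul hsinc).mul hcosc)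
  have hcont_g0 : Continuous g₀ := by
    rw [hg₀fun]
    exact (contDiff_const.mul (hsinc.pow 2)).continuous
  -- choose τ
  set g'0 := derivWithin g (Set.Icc 0 1) 0 with hg'0def
  have hg'0ne : g'0 ≠ 0 := ne_of_lt hg'0
  set τ := 2 / (-g'0) with hτdef
  have hτ : 0 < τ := div_pos two_pos (by linarith)
  have hτg : τ * g'0 = -2 := by
    rw [hτdef, div_mul_eq_mul_div, div_eq_iff (neg_ne_zero.mpr hg'0ne)]
    ring
  -- the function F
  set F := fun ζ : ℝ => τ * g ζ - g₁ ζ with hFdef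
  have hF0 : F 0 = 0 := by
    simp only [hFdef, hg0, hg₁ 0, mul_zero, Real.sin_zero]
    ring
  have hFcd : ContDiffOn ℝ 1 F (Set.Icc 0 1) :=
    (contDiffOn_const.mul hg).sub (hcd_g1.contDiffOn)
  have hUD : UniqueDiffOn ℝ (Set.Icc (0:ℝ) 1) := uniqueDiffOn_Icc zero_lt_one
  have hFderivcont : ContinuousOn (derivWithin F (Set.Icc 0 1)) (Set.Icc 0 1) :=
    hFcd.continuousOn_derivWithin hUD le_rfl
  have h0mem : (0:ℝ) ∈ Set.Icc (0:ℝ) 1 := ⟨le_refl 0, zero_le_one⟩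
  have hg1d : HasDerivAt g₁ (-1) 0 := by rw [hg₁fun]; exact g1_hasDerivAt_aux σ κ
  have hgd : HasDerivWithinAt g g'0 (Set.Icc 0 1) 0 :=
    ((hg.differentiableOn one_ne_zero) 0 h0mem).hasDerivWithinAt
  have hFd : HasDerivWithinAt F (τ * g'0 - (-1)) (Set.Icc 0 1) 0 :=
    (hgd.const_mul τ).sub hg1d.hasDerivWithinAt
  have hFd0 : derivWithin F (Set.Icc 0 1) 0 = -1 := by
    rw [hFd.derivWithin (hUD 0 h0mem), hτg]; norm_num
  -- neighborhood where derivative is negative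
  have htend : Filter.Tendsto (derivWithin F (Set.Icc 0 1)) (nhdsWithin 0 (Set.Icc 0 1))
      (nhds (-1)) := by
    have h := hFderivcont 0 h0mem
    rwa [ContinuousWithinAt, hFd0] at h
  have hev : ∀ᶠ x in nhdsWithin 0 (Set.Icc (0:ℝ) 1), derivWithin F (Set.Icc 0 1) x < 0 :=
    htend.eventually_lt_const (by norm_num)
  obtain ⟨δ, hδpos, hδ⟩ := Metric.mem_nhdsWithin_iff.mp hev
  set δ' := min (δ/2) (1/2) with hδ'def
  have hδ'pos : 0 < δ' := lt_min (by linarith) (by norm_num)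
  have hδ'half : δ' ≤ 1/2 := min_le_right _ _
  have hδ'ltδ : δ' < δ := lt_of_le_of_lt (min_le_left _ _) (by linarith)
  have hderivneg : ∀ x ∈ Set.Icc (0:ℝ) δ', derivWithin F (Set.Icc 0 1) x < 0 := by
    intro x hx
    apply hδ
    constructor
    · rw [Metric.mem_ball, Real.dist_eq, sub_zero, abs_of_nonneg hx.1]
      linarith [hx.2]
    · exact ⟨hx.1, by linarith [hx.2]⟩
  have hsub01 : Set.Icc (0:ℝ) δ' ⊆ Set.Icc (0:ℝ) 1 :=
    Set.Icc_subset_Icc le_rfl (by linarith)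
  have hanti : StrictAntiOn F (Set.Icc 0 δ') := by
    apply strictAntiOn_of_deriv_neg (convex_Icc 0 δ') (hFcd.continuousOn.mono hsub01)
    intro x hx
    rw [interior_Icc] at hx
    have hmem : Set.Icc (0:ℝ) 1 ∈ nhds x := Icc_mem_nhds hx.1 (by linarith [hx.2])
    rw [← derivWithin_of_mem_nhds hmem]
    exact hderivneg x ⟨le_of_lt hx.1, le_of_lt hx.2⟩
  have hA : ∀ ζ ∈ Set.Icc (0:ℝ) δ', F ζ ≤ 0 := by
    intro ζ hζ
    rcases eq_or_lt_of_le hζ.1 with h | h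
    · rw [← h, hF0]
    · have := hanti ⟨le_refl 0, le_of_lt hδ'pos⟩ hζ h
      rw [hF0] at this
      exact le_of_lt this
  -- flat region
  obtain ⟨ε, ⟨hε0, hε1⟩, hεflat⟩ := hflat
  set ε' := min ε (1/2) with hε'def
  have hε'pos : 0 < ε' := lt_min hε0 (by norm_num)
  have hε'half : ε' ≤ 1/2 := min_le_right _ _
  have hε'le : ε' ≤ ε := min_le_left _ _
  -- middle region
  have hKsub : Set.Icc δ' (1-ε') ⊆ Set.Icc (0:ℝ) 1 :=
    Set.Icc_subset_Icc (le_of_lt hδ'pos) (by linarith)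
  have hKne : (Set.Icc δ' (1-ε')).Nonempty := ⟨δ', le_refl _, by linarith⟩
  have hg0pos : ∀ ζ ∈ Set.Icc δ' (1-ε'), 0 < g₀ ζ := by
    intro ζ hζ
    have h1 : 0 < ζ := lt_of_lt_of_le hδ'pos hζ.1
    have h2 : ζ < 1 := by linarith [hζ.2]
    have hs : 0 < Real.sin (π * ζ) :=
      Real.sin_pos_of_pos_of_lt_pi (by positivity) (by nlinarith)
    rw [hg₀]
    exact mul_pos (div_pos one_pos (mul_pos hκpos hπ)) (pow_pos hs 2)
  have hφcont : ContinuousOn (fun ζ => F ζ / g₀ ζ) (Set.Icc δ' (1-ε')) :=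
    ((hFcd.continuousOn.mono hKsub).div (hcont_g0.continuousOn)
      (fun ζ hζ => ne_of_gt (hg0pos ζ hζ)))
  obtain ⟨ζm, hζm, hmax⟩ := isCompact_Icc.exists_isMaxOn hKne hφcont
  set c₂ := F ζm / g₀ ζm with hc₂def
  have hB : ∀ ζ ∈ Set.Icc δ' (1-ε'), F ζ ≤ c₂ * g₀ ζ := by
    intro ζ hζ
    exact (div_le_iff₀ (hg0pos ζ hζ)).mp (isMaxOn_iff.mp hmax ζ hζ)
  -- right region
  have hC : ∀ ζ ∈ Set.Icc (1-ε') 1, F ζ ≤ |σ| * g₀ ζ := by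
    intro ζ hζ
    have hgz : g ζ = 0 := hεflat ζ ⟨by linarith [hζ.1], hζ.2⟩
    have hζhalf : (1:ℝ)/2 ≤ ζ := by linarith [hζ.1]
    have hζ1 : ζ ≤ 1 := hζ.2
    have hS : 0 ≤ Real.sin (π * ζ) :=
      Real.sin_nonneg_of_nonneg_of_le_pi (by positivity) (by nlinarith)
    have hCc : Real.cos (π * ζ) ≤ 0 :=
      Real.cos_nonpos_of_pi_div_two_le_of_le (by nlinarith) (by nlinarith)
    have key : 0 ≤ |σ| * g₀ ζ + g₁ ζ := by
      rw [hg₀, hg₁]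
      have e : |σ| * ((1/(κ*π)) * Real.sin (π*ζ)^2) +
          ((σ/(π*κ)) * Real.sin (π*ζ)^2 - (1/π) * Real.sin (π*ζ) * Real.cos (π*ζ)) =
          (1/(κ*π)) * ((|σ|+σ) * Real.sin (π*ζ)^2) +
          (1/π) * (Real.sin (π*ζ) * (-Real.cos (π*ζ))) := by
        field_simp
        ring
      rw [e]
      apply add_nonneg
      · exact mul_nonneg (le_of_lt (div_pos one_pos (mul_pos hκpos hπ)))
          (mul_nonneg (by linarith [neg_abs_le σ]) (sq_nonneg _))
      · exact mul_nonneg (le_of_lt (div_pos one_pos hπ))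
          (mul_nonneg hS (by linarith))
    have : F ζ = -g₁ ζ := by rw [hFdef]; simp [hgz]
    linarith
  -- assemble
  set c := max (max c₂ |σ|) 0 with hcdef
  refine ⟨c, τ, hτ, ?_⟩
  intro ζ hζ
  have key : F ζ ≤ c * g₀ ζ := by
    rcases le_total ζ δ' with h | h
    · have h1 := hA ζ ⟨hζ.1, h⟩
      have h2 : 0 ≤ c * g₀ ζ := mul_nonneg (le_max_right _ _) (hg₀nonneg ζ)
      linarith
    · rcases le_total ζ (1-ε') with h2 | h2
      · have h1 := hB ζ ⟨h, h2⟩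
        have h3 : c₂ ≤ c := le_trans (le_max_left _ _) (le_max_left _ _)
        have := mul_le_mul_of_nonneg_right h3 (hg₀nonneg ζ)
        linarith
      · have h1 := hC ζ ⟨h2, hζ.2⟩
        have h3 : |σ| ≤ c := le_trans (le_max_right _ _) (le_max_left _ _)
        have := mul_le_mul_of_nonneg_right h3 (hg₀nonneg ζ)
        linarith
  have e : (c/τ) * g₀ ζ + (1/τ) * g₁ ζ = (c * g₀ ζ + g₁ ζ)/τ := by ring
  have key' : τ * g ζ - g₁ ζ ≤ c * g₀ ζ := key
  rw [e, le_div_iff₀ hτ]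
  nlinarith [key']
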